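/- Let σ₁ < σ₂ be real numbers, let q : ℝ → ℝ, and let ψ : ℝ → ℝ be three times differentiable on (σ₁,σ₂) with ψ'(t) > 0 for all t ∈ (σ₁,σ₂). If ψ' satisfies Kummer's equation relative to q on (σ₁,σ₂), then the function u(t) = cos(ψ(t))/√(ψ'(t)) satisfies u''(t) + q(t)·u(t) = 0 for all t ∈ (σ₁,σ₂). -/

import Mathlib

open Real Set

theorem kummer_implies_cos_solution (σ₁ σ₂ : ℝ) (hσ : σ₁ < σ₂) (q ψ : ℝ → ℝ)
    (hdiff : ∀ t ∈ Ioo σ₁ σ₂, DifferentiableAt ℝ ψ t ∧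
      DifferentiableAt ℝ (deriv ψ) t ∧ DifferentiableAt ℝ (deriv (deriv ψ)) t)
    (hpos : ∀ t ∈ Ioo σ₁ σ₂, 0 < deriv ψ t)
    (hkummer : ∀ t ∈ Ioo σ₁ σ₂,
      q t - (deriv ψ t) ^ 2 - (1 / 2) * (deriv (deriv (deriv ψ)) t / deriv ψ t)
        + (3 / 4) * (deriv (deriv ψ) t / deriv ψ t) ^ 2 = 0) :
    ∀ t ∈ Ioo σ₁ σ₂,
      deriv (deriv (fun s => Real.cos (ψ s) / Real.sqrt (deriv ψ s))) t
        + q t * (Real.cos (ψ t) / Real.sqrt (deriv ψ t)) = 0 := by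
  intro t ht
  obtain ⟨hψ1, hψ2, hψ3⟩ := hdiff t ht
  have hpt : 0 < deriv ψ t := hpos t ht
  -- first derivative formula on the interval
  have key : ∀ x ∈ Ioo σ₁ σ₂, HasDerivAt (fun s => Real.cos (ψ s) / Real.sqrt (deriv ψ s))
      (-Real.sin (ψ x) * Real.sqrt (deriv ψ x)
        - Real.cos (ψ x) * deriv (deriv ψ) x / (2 * deriv ψ x * Real.sqrt (deriv ψ x))) x := by
    intro x hx
    obtain ⟨h1, h2, h3⟩ := hdiff x hx
    have hpx : 0 < deriv ψ x := hpos x hx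
    have hsx : 0 < Real.sqrt (deriv ψ x) := Real.sqrt_pos.2 hpx
    have hψd : HasDerivAt ψ (deriv ψ x) x := h1.hasDerivAt
    have hp' : HasDerivAt (deriv ψ) (deriv (deriv ψ) x) x := h2.hasDerivAt
    have hsqrt : HasDerivAt (fun s => Real.sqrt (deriv ψ s))
        (deriv (deriv ψ) x / (2 * Real.sqrt (deriv ψ x))) x := hp'.sqrt hpx.ne'
    have hcos : HasDerivAt (fun s => Real.cos (ψ s)) (-Real.sin (ψ x) * deriv ψ x) x := hψd.cos
    have hmain : HasDerivAt (fun s => Real.cos (ψ s) / Real.sqrt (deriv ψ s)) _ x :=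
      hcos.div hsqrt hsx.ne'
    convert hmain using 1
    have hs2 : Real.sqrt (deriv ψ x) ^ 2 = deriv ψ x := Real.sq_sqrt hpx.le
    set s := Real.sqrt (deriv ψ x) with hsdef
    rw [show deriv ψ x = s ^ 2 from hs2.symm]
    field_simp
  -- the second derivative equals the derivative of the formula
  have hderiv_eq : deriv (deriv (fun s => Real.cos (ψ s) / Real.sqrt (deriv ψ s))) t
      = deriv (fun x => -Real.sin (ψ x) * Real.sqrt (deriv ψ x)
        - Real.cos (ψ x) * deriv (deriv ψ) x / (2 * deriv ψ x * Real.sqrt (deriv ψ x))) t := by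
    apply Filter.EventuallyEq.deriv_eq
    filter_upwards [Ioo_mem_nhds ht.1 ht.2] with x hx
    exact (key x hx).deriv
  -- compute the derivative of the formula at t
  have hst : 0 < Real.sqrt (deriv ψ t) := Real.sqrt_pos.2 hpt
  have hψd : HasDerivAt ψ (deriv ψ t) t := hψ1.hasDerivAt
  have hp' : HasDerivAt (deriv ψ) (deriv (deriv ψ) t) t := hψ2.hasDerivAt
  have hp'' : HasDerivAt (deriv (deriv ψ)) (deriv (deriv (deriv ψ)) t) t := hψ3.hasDerivAt
  have hsqrt : HasDerivAt (fun s => Real.sqrt (deriv ψ s))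
      (deriv (deriv ψ) t / (2 * Real.sqrt (deriv ψ t))) t := hp'.sqrt hpt.ne'
  have hcos : HasDerivAt (fun s => Real.cos (ψ s)) (-Real.sin (ψ t) * deriv ψ t) t := hψd.cos
  have hA : HasDerivAt (fun x => -Real.sin (ψ x) * Real.sqrt (deriv ψ x))
      ((-(Real.cos (ψ t) * deriv ψ t)) * Real.sqrt (deriv ψ t)
        + (-Real.sin (ψ t)) * (deriv (deriv ψ) t / (2 * Real.sqrt (deriv ψ t)))) t :=
    (hψd.sin.neg).mul hsqrt
  have hN : HasDerivAt (fun x => Real.cos (ψ x) * deriv (deriv ψ) x)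
      ((-Real.sin (ψ t) * deriv ψ t) * deriv (deriv ψ) t
        + Real.cos (ψ t) * deriv (deriv (deriv ψ)) t) t := hcos.mul hp''
  have hD : HasDerivAt (fun x => 2 * deriv ψ x * Real.sqrt (deriv ψ x))
      ((2 * deriv (deriv ψ) t) * Real.sqrt (deriv ψ t)
        + (2 * deriv ψ t) * (deriv (deriv ψ) t / (2 * Real.sqrt (deriv ψ t)))) t :=
    (hp'.const_mul 2).mul hsqrt
  have hD0 : 2 * deriv ψ t * Real.sqrt (deriv ψ t) ≠ 0 := by positivity
  have hB : HasDerivAt (fun x => Real.cos (ψ x) * deriv (deriv ψ) x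
      / (2 * deriv ψ x * Real.sqrt (deriv ψ x))) _ t := hN.div hD hD0
  have hg : HasDerivAt (fun x => -Real.sin (ψ x) * Real.sqrt (deriv ψ x)
      - Real.cos (ψ x) * deriv (deriv ψ) x / (2 * deriv ψ x * Real.sqrt (deriv ψ x))) _ t :=
    hA.sub hB
  rw [hderiv_eq, hg.deriv]
  -- algebra
  have hq : q t = (deriv ψ t) ^ 2 + (1 / 2) * (deriv (deriv (deriv ψ)) t / deriv ψ t)
      - (3 / 4) * (deriv (deriv ψ) t / deriv ψ t) ^ 2 := by
    have := hkummer t ht; linarith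
  have hs2 : Real.sqrt (deriv ψ t) ^ 2 = deriv ψ t := Real.sq_sqrt hpt.le
  rw [hq]
  set s := Real.sqrt (deriv ψ t) with hsdef
  rw [show deriv ψ t = s ^ 2 from hs2.symm]
  field_simp
  ring
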